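/- Let C be a small category, I a small filtered category, G : I ⥤ C a functor, and Q the colimit of G ⋙ y in Pre(C), with cocone components ι_j : y(G j) ⟶ Q. Let P be any presheaf on C and f : P ⟶ Q a morphism of presheaves. If for every object j of I the base change of f along ι_j, namely the projection P ×_Q y(G j) ⟶ y(G j) from the pullback in Pre(C), is an isomorphism, then f is an isomorphism. -/

import Mathlib

open CategoryTheory CategoryTheory.Limits

universe u

theorem isIso_of_isIso_pullback_along_ind_components {C : Type u} [SmallCategory C]
    {I : Type u} [SmallCategory I] [IsFiltered I] (G : I ⥤ C)
    (P : Cᵒᵖ ⥤ Type u) (f : P ⟶ colimit (G ⋙ yoneda))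
    (h : ∀ j : I, IsIso (pullback.snd f (colimit.ι (G ⋙ yoneda) j))) :
    IsIso f := by
  rw [NatTrans.isIso_iff_isIso_app]
  intro X
  rw [isIso_iff_bijective]
  set F := (evaluation Cᵒᵖ (Type u)).obj X with hF
  -- pointwise pullback projections are isos
  have k2 : ∀ j : I, IsIso (pullback.snd (f.app X) ((colimit.ι (G ⋙ yoneda) j).app X)) := by
    intro j
    have := h j
    have e := PreservesPullback.iso_hom_snd F f (colimit.ι (G ⋙ yoneda) j)
    have : IsIso ((PreservesPullback.iso F f (colimit.ι (G ⋙ yoneda) j)).hom ≫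
        pullback.snd (F.map f) (F.map (colimit.ι (G ⋙ yoneda) j))) := by
      rw [e]; infer_instance
    have : IsIso (pullback.snd (F.map f) (F.map (colimit.ι (G ⋙ yoneda) j))) :=
      IsIso.of_isIso_comp_left (PreservesPullback.iso F f (colimit.ι (G ⋙ yoneda) j)).hom _
    exact this
  -- every element of the colimit comes from some component
  have surj : ∀ q : (colimit (G ⋙ yoneda)).obj X,
      ∃ (j : I) (x : (yoneda.obj (G.obj j)).obj X), (colimit.ι (G ⋙ yoneda) j).app X x = q := by
    intro q
    obtain ⟨j, x, hx⟩ := Types.jointly_surjective'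
      ((colimitObjIsoColimitCompEvaluation (G ⋙ yoneda) X).hom q)
    refine ⟨j, x, ?_⟩
    have := congrArg (fun φ => φ x) (colimitObjIsoColimitCompEvaluation_ι_app_hom (G ⋙ yoneda) j X)
    simp only [types_comp_apply] at this
    apply (colimitObjIsoColimitCompEvaluation (G ⋙ yoneda) X).toEquiv.injective
    simpa [Iso.toEquiv, this] using hx
  constructor
  · -- injective
    intro p₁ p₂ hp
    obtain ⟨j, x, hx⟩ := surj (f.app X p₂)
    have hb := (isIso_iff_bijective _).mp (k2 j)
    set g := (colimit.ι (G ⋙ yoneda) j).app X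
    have h1 : f.app X p₁ = g x := by rw [hp, hx]
    have h2 : f.app X p₂ = g x := hx.symm
    let e₁ := (Types.pullbackIsoPullback (f.app X) g).inv ⟨(p₁, x), h1⟩
    let e₂ := (Types.pullbackIsoPullback (f.app X) g).inv ⟨(p₂, x), h2⟩
    have hs : pullback.snd (f.app X) g e₁ = pullback.snd (f.app X) g e₂ := by
      simp [e₁, e₂, Types.pullbackIsoPullback_inv_snd_apply]
    have he : e₁ = e₂ := hb.1 hs
    have hsub : (⟨(p₁, x), h1⟩ : {p : P.obj X × (yoneda.obj (G.obj j)).obj X // f.app X p.1 = g p.2}) =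
        ⟨(p₂, x), h2⟩ :=
      (Types.pullbackIsoPullback (f.app X) g).toEquiv.symm.injective he
    exact congrArg Prod.fst (congrArg Subtype.val hsub)
  · -- surjective
    intro q
    obtain ⟨j, x, hx⟩ := surj q
    have hb := (isIso_iff_bijective _).mp (k2 j)
    set g := (colimit.ι (G ⋙ yoneda) j).app X
    obtain ⟨z, hz⟩ := hb.2 x
    refine ⟨pullback.fst (f.app X) g z, ?_⟩
    have := congrArg (fun φ => φ z) (pullback.condition (f := f.app X) (g := g))
    simp only [types_comp_apply] at this
    rw [this, hz, hx]
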